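/- Let m be a positive integer and suppose t_i(β) + t'_i(β) = c is a constant (a multiple of 1/(2n)). Then the quantity sign(sin(π(m c + 2φ))) is independent of β; consequently, if φ is chosen with sin(π(m c + 2φ)) ≠ 0, then for all β ∈ (0, 2π], sign(Δ^φ_i(β)/Δ^φ_i(2π)) = sign(sin(π m (t_i(β) - t'_i(β))) / sin(π m (t_i(2π) - t'_i(2π)))), which is independent of the phase φ. -/
import Mathlib


open Real

noncomputable def sawtooth (t : ℝ) : ℝ := 2 * |t - ⌊t⌋ - 1/2|

private lemma sign_mul' (a b : ℝ) : Real.sign (a * b) = Real.sign a * Real.sign b := by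
  rcases lt_trichotomy a 0 with ha | rfl | ha
  · rcases lt_trichotomy b 0 with hb | rfl | hb
    · rw [Real.sign_of_pos (mul_pos_of_neg_of_neg ha hb), Real.sign_of_neg ha,
        Real.sign_of_neg hb]; ring
    · simp
    · rw [Real.sign_of_neg (mul_neg_of_neg_of_pos ha hb), Real.sign_of_neg ha,
        Real.sign_of_pos hb]; ring
  · simp
  · rcases lt_trichotomy b 0 with hb | rfl | hb
    · rw [Real.sign_of_neg (mul_neg_of_pos_of_neg ha hb), Real.sign_of_pos ha,
        Real.sign_of_neg hb]; ring
    · simp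
    · rw [Real.sign_of_pos (mul_pos ha hb), Real.sign_of_pos ha, Real.sign_of_pos hb]; ring

private lemma sign_div' (a b : ℝ) : Real.sign (a / b) = Real.sign a * Real.sign b := by
  rw [div_eq_mul_inv, sign_mul', Real.sign_inv]

/-- `cos (2πx) = -cos (2π * |fract x - 1/2|)`. -/
private lemma cos_eq (x : ℝ) :
    Real.cos (2 * π * x) = -Real.cos (2 * π * |Int.fract x - 1/2|) := by
  have h1 : 2 * π * x = 2 * π * Int.fract x + (⌊x⌋ : ℤ) * (2 * π) := by
    rw [Int.fract]; ring
  rw [h1, Real.cos_add_int_mul_two_pi]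
  have h2 : 2 * π * Int.fract x = 2 * π * (Int.fract x - 1/2) + π := by ring
  rw [h2, Real.cos_add_pi, ← Real.cos_abs (2 * π * (Int.fract x - 1/2)),
    abs_mul, abs_of_pos (by positivity : (0:ℝ) < 2 * π)]

private lemma sign_cos_sub (u v : ℝ) (hu : u ∈ Set.Icc (0:ℝ) (1/2))
    (hv : v ∈ Set.Icc (0:ℝ) (1/2)) :
    Real.sign (Real.cos (2 * π * v) - Real.cos (2 * π * u)) = Real.sign (u - v) := by
  have hpi := Real.pi_pos
  have hu' : 2 * π * u ∈ Set.Icc 0 π :=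
    ⟨mul_nonneg (by positivity) hu.1, by nlinarith [hu.2]⟩
  have hv' : 2 * π * v ∈ Set.Icc 0 π :=
    ⟨mul_nonneg (by positivity) hv.1, by nlinarith [hv.2]⟩
  rcases lt_trichotomy u v with h | rfl | h
  · have : Real.cos (2 * π * v) < Real.cos (2 * π * u) :=
      Real.strictAntiOn_cos hu' hv' (by nlinarith)
    rw [Real.sign_of_neg (by linarith), Real.sign_of_neg (by linarith)]
  · simp
  · have : Real.cos (2 * π * u) < Real.cos (2 * π * v) :=
      Real.strictAntiOn_cos hv' hu' (by nlinarith)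
    rw [Real.sign_of_pos (by linarith), Real.sign_of_pos (by linarith)]

private lemma saw_sign (x y : ℝ) :
    Real.sign (sawtooth x - sawtooth y) =
      -(Real.sign (Real.sin (π * (x + y))) * Real.sign (Real.sin (π * (x - y)))) := by
  have hprod : Real.sin (π * (x + y)) * Real.sin (π * (x - y)) =
      (Real.cos (2 * π * y) - Real.cos (2 * π * x)) / 2 := by
    rw [Real.cos_sub_cos]
    have h1 : (2 * π * y + 2 * π * x) / 2 = π * (x + y) := by ring
    have h2 : (2 * π * y - 2 * π * x) / 2 = -(π * (x - y)) := by ring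
    rw [h1, h2, Real.sin_neg]; ring
  have key : Real.sign (Real.sin (π * (x + y))) * Real.sign (Real.sin (π * (x - y)))
      = Real.sign (|Int.fract y - 1/2| - |Int.fract x - 1/2|) := by
    rw [← sign_mul', hprod, cos_eq x, cos_eq y]
    have h3 : (-Real.cos (2 * π * |Int.fract y - 1/2|) -
        -Real.cos (2 * π * |Int.fract x - 1/2|)) / 2 =
        (Real.cos (2 * π * |Int.fract x - 1/2|) -
          Real.cos (2 * π * |Int.fract y - 1/2|)) * (1/2) := by ring
    rw [h3, sign_mul', Real.sign_of_pos (by norm_num : (0:ℝ) < 1/2), mul_one]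
    apply sign_cos_sub
    all_goals
      refine ⟨abs_nonneg _, abs_sub_le_iff.2 ⟨?_, ?_⟩⟩ <;>
        [skip; skip] <;>
        · have h1 := Int.fract_lt_one x
          have h2 := Int.fract_lt_one y
          have h3 := Int.fract_nonneg x
          have h4 := Int.fract_nonneg y
          linarith
  rw [key]
  have h4 : sawtooth x - sawtooth y =
      (|Int.fract y - 1/2| - |Int.fract x - 1/2|) * (-2) := by
    simp only [sawtooth, Int.fract]; ring
  rw [h4, sign_mul', Real.sign_of_neg (by norm_num : (-2:ℝ) < 0)]
  ring

theorem sign_quotient_indep (m n : ℕ) (hm : 0 < m) (hn : 0 < n)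
    (t t' : ℝ → ℝ) (c : ℝ) (hc : ∃ j : ℤ, c = j * (1 / (2 * n)))
    (hsum : ∀ β, t β + t' β = c) (φ : ℝ)
    (hφ : Real.sin (π * (m * c + 2 * φ)) ≠ 0)
    (Δ : ℝ → ℝ)
    (hΔ : ∀ β, Δ β = sawtooth (m * t β + φ) - sawtooth (m * t' β + φ)) :
    ∀ β ∈ Set.Ioc (0:ℝ) (2 * π),
      Real.sign (Δ β / Δ (2 * π)) =
        Real.sign (Real.sin (π * m * (t β - t' β)) /
          Real.sin (π * m * (t (2 * π) - t' (2 * π)))) := by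
  have key : ∀ γ : ℝ, Real.sign (Δ γ) =
      -(Real.sign (Real.sin (π * (m * c + 2 * φ))) *
        Real.sign (Real.sin (π * m * (t γ - t' γ)))) := by
    intro γ
    rw [hΔ γ, saw_sign]
    have h1 : π * ((m * t γ + φ) + (m * t' γ + φ)) = π * (m * c + 2 * φ) := by
      rw [← hsum γ]; ring
    have h2 : π * ((m * t γ + φ) - (m * t' γ + φ)) = π * m * (t γ - t' γ) := by ring
    rw [h1, h2]
  intro β _
  rw [sign_div', sign_div', key, key]
  have hs : Real.sign (Real.sin (π * (m * c + 2 * φ))) *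
      Real.sign (Real.sin (π * (m * c + 2 * φ))) = 1 := by
    rcases Real.sign_apply_eq_of_ne_zero _ hφ with h | h <;> rw [h] <;> norm_num
  have gen : ∀ s a b : ℝ, s * s = 1 → -(s * a) * -(s * b) = a * b := by
    intro s a b h; linear_combination a * b * h
  exact gen _ _ _ hs
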